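/- arXiv:2509.13283 — 5 statements merged into one kernel-verified Lean document; each statement's English description precedes it below -/
import Mathlib

section
/- For any type Q in the set of empirical measures with denominator n on a finite alphabet of size k, and any fixed block length m ≤ n, the total variation distance between the conditional law of (X_1,...,X_m) given that the empirical measure P_n equals Q (i.e., the multivariate hypergeometric sampling-without-replacement law) and the i.i.d. product law Q^⊗m is at most m(m-1)/(2n). -/
open Finset

private lemma desc_succ' (c t : ℕ) :
    c.descFactorial (t + 1) = c * (c - 1).descFactorial t := by
  cases c with
  | zero => simp
  | succ c => rw [Nat.succ_descFactorial_succ]; simp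

private lemma hyper_sum (k : ℕ) : ∀ (m : ℕ) (c : Fin k → ℕ),
    ∑ x : Fin m → Fin k,
        ∏ j, (c j).descFactorial ((univ.filter (fun i : Fin m => x i = j)).card)
      = (∑ j, c j).descFactorial m := by
  intro m
  induction m with
  | zero => intro c; simp
  | succ m ih =>
    intro c
    rw [← (Fin.consEquiv (fun _ : Fin (m + 1) => Fin k)).sum_comp, Fintype.sum_prod_type]
    have hcnt : ∀ (a : Fin k) (g : Fin m → Fin k) (j : Fin k),
        ((univ.filter (fun i : Fin (m + 1) =>
            (Fin.cons a g : ∀ _ : Fin (m + 1), Fin k) i = j)).card)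
          = (if a = j then 1 else 0) + (univ.filter (fun i : Fin m => g i = j)).card := by
      intro a g j
      rw [card_filter, card_filter, Fin.sum_univ_succ]
      simp
    have hprod : ∀ (a : Fin k) (g : Fin m → Fin k),
        (∏ j, (c j).descFactorial
            ((univ.filter (fun i : Fin (m + 1) =>
                (Fin.cons a g : ∀ _ : Fin (m + 1), Fin k) i = j)).card))
          = c a * ∏ j, ((Function.update c a (c a - 1)) j).descFactorial
              ((univ.filter (fun i : Fin m => g i = j)).card) := by
      intro a g
      rw [Fintype.prod_eq_mul_prod_compl a, Fintype.prod_eq_mul_prod_compl a, ← mul_assoc]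
      congr 1
      · rw [hcnt a g a, if_pos rfl, add_comm, desc_succ']
        simp [Function.update_self]
      · apply Finset.prod_congr rfl
        intro j hj
        have hja : a ≠ j := by
          simp only [mem_compl, mem_singleton] at hj
          exact fun h => hj h.symm
        rw [hcnt a g j, if_neg hja, zero_add, Function.update_of_ne (Ne.symm hja)]
    calc ∑ a : Fin k, ∑ g : Fin m → Fin k,
          ∏ j, (c j).descFactorial
            ((univ.filter (fun i : Fin (m + 1) => (Fin.consEquiv fun _ => Fin k) (a, g) i = j)).card)
        = ∑ a : Fin k, c a * ((∑ j, c j) - 1).descFactorial m := by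
          apply Finset.sum_congr rfl
          intro a _
          have : ∀ g : Fin m → Fin k,
              (∏ j, (c j).descFactorial
                ((univ.filter (fun i : Fin (m + 1) =>
                    (Fin.consEquiv fun _ => Fin k) (a, g) i = j)).card))
              = c a * ∏ j, ((Function.update c a (c a - 1)) j).descFactorial
                  ((univ.filter (fun i : Fin m => g i = j)).card) := by
            intro g
            simpa only [Fin.consEquiv_apply] using hprod a g
          rw [Finset.sum_congr rfl fun g _ => this g, ← Finset.mul_sum, ih]
          rcases Nat.eq_zero_or_pos (c a) with h0 | hpos
          · rw [h0, zero_mul, zero_mul]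
          · congr 2
            have hs : ∑ j, Function.update c a (c a - 1) j
                = (c a - 1) + ∑ j ∈ univ.erase a, c j := by
              rw [← Finset.add_sum_erase _ _ (mem_univ a), Function.update_self]
              congr 1
              apply Finset.sum_congr rfl
              intro j hj
              exact Function.update_of_ne (Finset.ne_of_mem_erase hj) _ _
            have hs2 : ∑ j, c j = c a + ∑ j ∈ univ.erase a, c j :=
              (Finset.add_sum_erase _ _ (mem_univ a)).symm
            omega
      _ = (∑ j, c j).descFactorial (m + 1) := by
          rw [← Finset.sum_mul, desc_succ']

private lemma pow_sum (k m : ℕ) (c : Fin k → ℕ) :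
    ∑ x : Fin m → Fin k, ∏ i, c (x i) = (∑ j, c j) ^ m := by
  have : ((∑ j, c j) ^ m) = ∏ _i : Fin m, ∑ j, c j := by
    rw [Finset.prod_const, card_univ, Fintype.card_fin]
  rw [this, Finset.prod_univ_sum]
  simp

private lemma fiber_prod (k m : ℕ) (c : Fin k → ℕ) (x : Fin m → Fin k) :
    ∏ j, (c j) ^ ((univ.filter (fun i : Fin m => x i = j)).card) = ∏ i, c (x i) := by
  rw [← Finset.prod_fiberwise' univ x c]
  exact Finset.prod_congr rfl fun j _ => (Finset.prod_const _).symm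

private lemma nat_bound (n : ℕ) : ∀ m, m ≤ n →
    2 * n ^ m ≤ 2 * n.descFactorial m + m * (m - 1) * n ^ (m - 1) := by
  intro m
  induction m with
  | zero => intro _; simp
  | succ m ih =>
    intro hm
    have hm' : m ≤ n := Nat.le_of_succ_le hm
    have h1 := ih hm'
    have hd : n.descFactorial (m + 1) = (n - m) * n.descFactorial m :=
      Nat.descFactorial_succ n m
    have hdp : n.descFactorial m ≤ n ^ m := Nat.descFactorial_le_pow n m
    rcases Nat.eq_zero_or_pos m with h0 | hpos
    · subst h0; simp [hd]
    · have hms : m - 1 + 1 = m := Nat.succ_pred_eq_of_pos hpos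
      have hpow : n ^ m = n * n ^ (m - 1) := by
        conv_lhs => rw [← hms]
        rw [pow_succ]; ring
      have key : n * (m * (m - 1) * n ^ (m - 1)) = m * (m - 1) * n ^ m := by
        rw [hpow]; ring
      have step : 2 * n ^ (m + 1) ≤ 2 * n * n.descFactorial m + m * (m - 1) * n ^ m := by
        calc 2 * n ^ (m + 1) = n * (2 * n ^ m) := by ring
          _ ≤ n * (2 * n.descFactorial m + m * (m - 1) * n ^ (m - 1)) :=
              Nat.mul_le_mul_left n h1
          _ = 2 * n * n.descFactorial m + n * (m * (m - 1) * n ^ (m - 1)) := by ring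
          _ = 2 * n * n.descFactorial m + m * (m - 1) * n ^ m := by rw [key]
      have split : 2 * n * n.descFactorial m
          = 2 * ((n - m) * n.descFactorial m) + 2 * m * n.descFactorial m := by
        have : n = (n - m) + m := (Nat.sub_add_cancel hm').symm
        nlinarith [Nat.sub_add_cancel hm']
      have last : m * (m - 1) * n ^ m + 2 * m * n.descFactorial m
          ≤ (m + 1) * m * n ^ m := by
        have h2 : 2 * m * n.descFactorial m ≤ 2 * m * n ^ m :=
          Nat.mul_le_mul_left _ hdp
        have h3 : m * (m - 1) + 2 * m = (m + 1) * m := by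
          cases m with
          | zero => simp
          | succ m' =>
            simp only [Nat.succ_sub_one]
            ring
        calc m * (m - 1) * n ^ m + 2 * m * n.descFactorial m
            ≤ m * (m - 1) * n ^ m + 2 * m * n ^ m := Nat.add_le_add_left h2 _
          _ = (m * (m - 1) + 2 * m) * n ^ m := by ring
          _ = (m + 1) * m * n ^ m := by rw [h3]
      calc 2 * n ^ (m + 1)
          ≤ 2 * n * n.descFactorial m + m * (m - 1) * n ^ m := step
        _ = 2 * ((n - m) * n.descFactorial m) + (m * (m - 1) * n ^ m
              + 2 * m * n.descFactorial m) := by rw [split]; ring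
        _ ≤ 2 * ((n - m) * n.descFactorial m) + (m + 1) * m * n ^ m := by
            exact Nat.add_le_add_left last _
        _ = 2 * n.descFactorial (m + 1) + (m + 1) * ((m + 1) - 1) * n ^ ((m + 1) - 1) := by
            rw [hd]; simp

/-- hypergeometric (sampling-without-replacement) block law vs. i.i.d.
product law: total variation bound m(m-1)/(2n). -/
theorem hypergeometric_to_product_tv_bound
    (k n m : ℕ) (hn : 0 < n) (hm : m ≤ n)
    (c : Fin k → ℕ) (hc : ∑ j, c j = n) :
    (1 / 2 : ℝ) *
        ∑ x : Fin m → Fin k,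
          |(∏ j, ((c j).descFactorial ((univ.filter (fun i : Fin m => x i = j)).card) : ℝ)) /
              (n.descFactorial m : ℝ)
            - ∏ i, (c (x i) : ℝ) / (n : ℝ)|
      ≤ (m : ℝ) * ((m : ℝ) - 1) / (2 * (n : ℝ)) := by
  set A : ℝ := (n.descFactorial m : ℝ) with hA
  set B : ℝ := ((n : ℝ)) ^ m with hB
  have hAposN : 0 < n.descFactorial m :=
    Nat.pos_of_ne_zero fun h =>
      absurd (Nat.descFactorial_eq_zero_iff_lt.mp h) (Nat.not_lt.mpr hm)
  have hApos : 0 < A := by rw [hA]; exact_mod_cast hAposN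
  have hBpos : 0 < B := pow_pos (by exact_mod_cast hn) m
  have hABn : n.descFactorial m ≤ n ^ m := Nat.descFactorial_le_pow n m
  have hAB : A ≤ B := by rw [hA, hB]; exact_mod_cast hABn
  set D : (Fin m → Fin k) → ℝ := fun x =>
    ∏ j, ((c j).descFactorial ((univ.filter (fun i : Fin m => x i = j)).card) : ℝ) with hD
  set E : (Fin m → Fin k) → ℝ := fun x => ∏ i, ((c (x i) : ℝ)) with hE
  have hDnn : ∀ x, 0 ≤ D x := fun x =>
    Finset.prod_nonneg fun j _ => by positivity
  have hsumD : ∑ x : Fin m → Fin k, D x = A := by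
    rw [hD, hA]
    push_cast [← hc]
    exact_mod_cast congrArg (fun t : ℕ => (t : ℝ)) (hyper_sum k m c)
  have hsumE : ∑ x : Fin m → Fin k, E x = B := by
    rw [hE, hB]
    have := pow_sum k m c
    rw [hc] at this
    have h2 := congrArg (fun t : ℕ => (t : ℝ)) this
    push_cast at h2
    exact h2
  have hDE : ∀ x, D x ≤ E x := by
    intro x
    rw [hD, hE]
    have h1 : (∏ j, (c j).descFactorial ((univ.filter (fun i : Fin m => x i = j)).card))
        ≤ ∏ j, (c j) ^ ((univ.filter (fun i : Fin m => x i = j)).card) :=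
      Finset.prod_le_prod' fun j _ => Nat.descFactorial_le_pow _ _
    have h2 := fiber_prod k m c x
    calc (∏ j, ((c j).descFactorial ((univ.filter (fun i : Fin m => x i = j)).card) : ℝ))
        = ((∏ j, (c j).descFactorial ((univ.filter (fun i : Fin m => x i = j)).card) : ℕ) : ℝ) := by
          push_cast; ring
      _ ≤ ((∏ i, c (x i) : ℕ) : ℝ) := by exact_mod_cast h1.trans (le_of_eq h2)
      _ = ∏ i, ((c (x i) : ℝ)) := by push_cast; ring
  have hPeq : ∀ x : Fin m → Fin k, (∏ i, (c (x i) : ℝ) / (n : ℝ)) = E x / B := by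
    intro x
    rw [hE, hB, Finset.prod_div_distrib, Finset.prod_const, card_univ, Fintype.card_fin]
  have habs : ∀ x : Fin m → Fin k,
      |D x / A - E x / B| = 2 * max (D x / A - E x / B) 0 - (D x / A - E x / B) := by
    intro x
    rcases le_total (D x / A - E x / B) 0 with h | h
    · rw [abs_of_nonpos h, max_eq_right h]; ring
    · rw [abs_of_nonneg h, max_eq_left h]; ring
  have hmaxle : ∀ x, max (D x / A - E x / B) 0 ≤ D x / A - D x / B := by
    intro x
    apply max_le
    · have h1 : D x / B ≤ E x / B := (div_le_div_iff_of_pos_right hBpos).mpr (hDE x)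
      linarith
    · have : D x / B ≤ D x / A := div_le_div_of_nonneg_left (hDnn x) hApos hAB
      linarith
  have hsum_abs :
      ∑ x : Fin m → Fin k, |D x / A - E x / B|
        ≤ 2 * (1 - A / B) := by
    have e1 : ∑ x : Fin m → Fin k, |D x / A - E x / B|
        = 2 * (∑ x : Fin m → Fin k, max (D x / A - E x / B) 0)
          - ∑ x : Fin m → Fin k, (D x / A - E x / B) := by
      rw [Finset.mul_sum, ← Finset.sum_sub_distrib]
      exact Finset.sum_congr rfl fun x _ => habs x
    have e2 : ∑ x : Fin m → Fin k, (D x / A - E x / B) = 0 := by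
      rw [Finset.sum_sub_distrib, ← Finset.sum_div, ← Finset.sum_div, hsumD, hsumE]
      rw [div_self (ne_of_gt hApos), div_self (ne_of_gt hBpos), sub_self]
    have e3 : ∑ x : Fin m → Fin k, max (D x / A - E x / B) 0 ≤ 1 - A / B := by
      calc ∑ x : Fin m → Fin k, max (D x / A - E x / B) 0
          ≤ ∑ x : Fin m → Fin k, (D x / A - D x / B) :=
            Finset.sum_le_sum fun x _ => hmaxle x
        _ = 1 - A / B := by
            rw [Finset.sum_sub_distrib, ← Finset.sum_div, ← Finset.sum_div, hsumD]
            rw [div_self (ne_of_gt hApos)]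
      done
    rw [e1, e2, sub_zero]
    linarith
  have hfinal : 1 - A / B ≤ (m : ℝ) * ((m : ℝ) - 1) / (2 * (n : ℝ)) := by
    rcases Nat.eq_zero_or_pos m with h0 | hmpos
    · subst h0
      simp [hA, hB]
    · have hnR : (0 : ℝ) < n := by exact_mod_cast hn
      have hp1 : (0 : ℝ) < (n : ℝ) ^ (m - 1) := pow_pos hnR _
      have hnbR : 2 * B ≤ 2 * A + (m : ℝ) * ((m : ℝ) - 1) * (n : ℝ) ^ (m - 1) := by
        have h := nat_bound n m hm
        have hcast : ((m - 1 : ℕ) : ℝ) = (m : ℝ) - 1 := by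
          push_cast [Nat.cast_sub hmpos]
          ring
        have h' : ((2 * n ^ m : ℕ) : ℝ)
            ≤ ((2 * n.descFactorial m + m * (m - 1) * n ^ (m - 1) : ℕ) : ℝ) := by
          exact_mod_cast h
        push_cast at h'
        rw [hA, hB]
        calc 2 * ((n : ℝ)) ^ m ≤ 2 * (n.descFactorial m : ℝ)
              + (m : ℝ) * ((m - 1 : ℕ) : ℝ) * (n : ℝ) ^ (m - 1) := by linarith
          _ = 2 * (n.descFactorial m : ℝ)
              + (m : ℝ) * ((m : ℝ) - 1) * (n : ℝ) ^ (m - 1) := by rw [hcast]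
      have hBsplit : B = (n : ℝ) * (n : ℝ) ^ (m - 1) := by
        rw [hB]
        conv_lhs => rw [← Nat.succ_pred_eq_of_pos hmpos]
        rw [pow_succ, Nat.pred_eq_sub_one]; ring
      have key : 2 * (n : ℝ) * (B - A) ≤ (m : ℝ) * ((m : ℝ) - 1) * B := by
        nlinarith [hnbR, hBsplit, hp1, hnR]
      have heq : 1 - A / B = (B - A) / B := by
        field_simp
      rw [heq, div_le_div_iff₀ hBpos (by positivity)]
      nlinarith [key, hBpos]
  calc (1 / 2 : ℝ) *
        ∑ x : Fin m → Fin k,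
          |(∏ j, ((c j).descFactorial ((univ.filter (fun i : Fin m => x i = j)).card) : ℝ)) /
              (n.descFactorial m : ℝ)
            - ∏ i, (c (x i) : ℝ) / (n : ℝ)|
      = (1 / 2 : ℝ) * ∑ x : Fin m → Fin k, |D x / A - E x / B| := by
        congr 1
        exact Finset.sum_congr rfl fun x _ => by rw [hPeq x]
    _ ≤ (1 / 2 : ℝ) * (2 * (1 - A / B)) := by linarith [hsum_abs]
    _ = 1 - A / B := by ring
    _ ≤ (m : ℝ) * ((m : ℝ) - 1) / (2 * (n : ℝ)) := hfinal
end

section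
/- The number of sequences of length n over a k-letter alphabet whose empirical type equals Q ∈ 𝒫_n satisfies (n+1)^{-k} · exp(n H(Q)) ≤ |𝒯(Q)| ≤ exp(n H(Q)), where 𝒯(Q) is the type class of Q and H is Shannon entropy (natural logarithm). -/
set_option maxHeartbeats 1000000

open Finset

lemma pow_mul_factorial_le_add (a m : ℕ) : a ^ m * a.factorial ≤ (a + m).factorial := by
  induction m with
  | zero => simp
  | succ m ih =>
      rw [pow_succ]
      calc a ^ m * a * a.factorial = a * (a ^ m * a.factorial) := by ring
        _ ≤ a * (a + m).factorial := by exact Nat.mul_le_mul_left a ih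
        _ ≤ (a + m + 1) * (a + m).factorial := Nat.mul_le_mul_right _ (by omega)
        _ = (a + (m+1)).factorial := by rw [← Nat.factorial_succ]; ring_nf

lemma add_factorial_le_pow_mul (a m : ℕ) : (a + m).factorial ≤ (a + m) ^ m * a.factorial := by
  induction m with
  | zero => simp
  | succ m ih =>
      have h1 : (a + (m+1)).factorial = (a + m + 1) * (a + m).factorial := by
        rw [← Nat.factorial_succ]; ring_nf
      rw [h1]
      calc (a + m + 1) * (a + m).factorial ≤ (a + m + 1) * ((a + m) ^ m * a.factorial) :=
            Nat.mul_le_mul_left _ ih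
        _ ≤ (a + m + 1) * ((a + m + 1) ^ m * a.factorial) := by
            exact Nat.mul_le_mul_left _ (Nat.mul_le_mul_right _ (Nat.pow_le_pow_left (by omega) m))
        _ = (a + (m+1)) ^ (m+1) * a.factorial := by ring_nf

lemma pow_factorial_cross (a b : ℕ) : a ^ b * a.factorial ≤ a ^ a * b.factorial := by
  rcases le_total b a with h | h
  · obtain ⟨m, rfl⟩ := Nat.exists_eq_add_of_le h
    calc (b + m) ^ b * (b + m).factorial ≤ (b + m) ^ b * ((b + m) ^ m * b.factorial) :=
          Nat.mul_le_mul_left _ (add_factorial_le_pow_mul b m)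
      _ = (b + m) ^ (b + m) * b.factorial := by rw [← mul_assoc, ← pow_add]
  · obtain ⟨m, rfl⟩ := Nat.exists_eq_add_of_le h
    calc a ^ (a + m) * a.factorial = a ^ a * (a ^ m * a.factorial) := by rw [pow_add]; ring
      _ ≤ a ^ a * (a + m).factorial := Nat.mul_le_mul_left _ (pow_mul_factorial_le_add a m)

lemma card_type_class_mul {n k : ℕ} (x0 : Fin n → Fin k) :
    (univ.filter (fun x : Fin n → Fin k =>
        ∀ j, (univ.filter (fun i => x i = j)).card
          = (univ.filter (fun i => x0 i = j)).card)).card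
      * ∏ j, ((univ.filter (fun i => x0 i = j)).card).factorial = n.factorial := by
  classical
  set B := univ.filter (fun x : Fin n → Fin k =>
      ∀ j, (univ.filter (fun i => x i = j)).card
        = (univ.filter (fun i => x0 i = j)).card) with hB
  have hmaps : ∀ σ ∈ (univ : Finset (Equiv.Perm (Fin n))), x0 ∘ σ ∈ B := by
    intro σ _
    simp only [hB, mem_filter, mem_univ, true_and]
    intro j
    refine Finset.card_bij' (fun i _ => σ i) (fun i _ => σ.symm i) ?_ ?_ ?_ ?_
    · intro i hi; simp only [mem_filter, mem_univ, true_and] at hi ⊢; exact hi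
    · intro i hi; simp only [mem_filter, mem_univ, true_and, Function.comp_apply] at hi ⊢
      simpa using hi
    · intro i _; simp
    · intro i _; simp
  have hgroup : (univ : Finset (Equiv.Perm (Fin n))).card
      = ∑ y ∈ B, ((univ : Finset (Equiv.Perm (Fin n))).filter
          (fun σ : Equiv.Perm (Fin n) => x0 ∘ ⇑σ = y)).card :=
    Finset.card_eq_sum_card_fiberwise hmaps
  have hfiber : ∀ y ∈ B,
      ((univ : Finset (Equiv.Perm (Fin n))).filter
          (fun σ : Equiv.Perm (Fin n) => x0 ∘ ⇑σ = y)).card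
        = ∏ j, ((univ.filter (fun i => x0 i = j)).card).factorial := by
    intro y hy
    simp only [hB, mem_filter, mem_univ, true_and] at hy
    have hcards : ∀ j, Fintype.card {i // y i = j} = Fintype.card {i // x0 i = j} := by
      intro j
      rw [Fintype.card_subtype, Fintype.card_subtype]
      exact hy j
    set σ0 : Fin n ≃ Fin n := Equiv.ofFiberEquiv
      (f := y) (g := x0) (fun j => Fintype.equivOfCardEq (hcards j)) with hσ0def
    have hσ0 : ∀ i, x0 (σ0 i) = y i := fun i => Equiv.ofFiberEquiv_map _ i
    have e1 : {σ : Equiv.Perm (Fin n) // x0 ∘ σ = y}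
        ≃ {σ : Equiv.Perm (Fin n) // x0 ∘ σ = x0} :=
      { toFun := fun τ => ⟨σ0.symm.trans τ.1, by
          funext i
          have := congrFun τ.2 (σ0.symm i)
          simp only [Function.comp_apply] at this ⊢
          simp only [Equiv.trans_apply, this, ← hσ0 (σ0.symm i), Equiv.apply_symm_apply]⟩
        invFun := fun ρ => ⟨σ0.trans ρ.1, by
          funext i
          have := congrFun ρ.2 (σ0 i)
          simp only [Function.comp_apply] at this ⊢
          simp only [Equiv.trans_apply, this, hσ0]⟩
        left_inv := fun τ => by
          ext i; simp
        right_inv := fun ρ => by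
          ext i; simp }
    calc ((univ : Finset (Equiv.Perm (Fin n))).filter
            (fun σ : Equiv.Perm (Fin n) => x0 ∘ ⇑σ = y)).card
        = Fintype.card {σ : Equiv.Perm (Fin n) // x0 ∘ σ = y} := (Fintype.card_subtype _).symm
      _ = Fintype.card {σ : Equiv.Perm (Fin n) // x0 ∘ σ = x0} := Fintype.card_congr e1
      _ = ∏ j, (Fintype.card {i // x0 i = j}).factorial := DomMulAct.stabilizer_card x0
      _ = ∏ j, ((univ.filter (fun i => x0 i = j)).card).factorial := by
          refine Finset.prod_congr rfl fun j _ => ?_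
          rw [Fintype.card_subtype]
  rw [Finset.sum_congr rfl hfiber, Finset.sum_const, smul_eq_mul] at hgroup
  rw [← hgroup]
  simp [Fintype.card_perm]

/-- the size of the type class of a type `Q = (c j / n)_j` on a `k`-letter
alphabet satisfies `(n+1)^{-k} exp(n H(Q)) ≤ |𝒯(Q)| ≤ exp(n H(Q))`, where `H` is the
Shannon entropy with natural logarithm. -/
theorem type_class_cardinality_bounds
    (k n : ℕ) (hn : 0 < n)
    (c : Fin k → ℕ) (hc : ∑ j, c j = n) :
    ((n : ℝ) + 1)⁻¹ ^ k *
        Real.exp ((n : ℝ) * (-∑ j, ((c j : ℝ) / n) * Real.log ((c j : ℝ) / n)))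
      ≤ ((univ.filter
            (fun x : Fin n → Fin k => ∀ j, (univ.filter (fun i => x i = j)).card = c j)).card : ℝ)
    ∧ ((univ.filter
            (fun x : Fin n → Fin k => ∀ j, (univ.filter (fun i => x i = j)).card = c j)).card : ℝ)
      ≤ Real.exp ((n : ℝ) * (-∑ j, ((c j : ℝ) / n) * Real.log ((c j : ℝ) / n))) := by
  classical
  have hn' : (0:ℝ) < n := by exact_mod_cast hn
  set p : Fin k → ℝ := fun j => (c j : ℝ) / n with hp
  have hcastsum : ∑ j, ((c j : ℝ)) = (n : ℝ) := by exact_mod_cast congrArg (Nat.cast : ℕ → ℝ) hc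
  have hpsum : ∑ j, p j = 1 := by
    simp only [hp, ← Finset.sum_div, hcastsum]
    field_simp
  have hpnonneg : ∀ j, 0 ≤ p j := fun j => div_nonneg (Nat.cast_nonneg _) hn'.le
  have hnp : ∀ j, (n : ℝ) * p j = (c j : ℝ) := by
    intro j; simp only [hp]; field_simp
  set E : ℝ := ∏ j, p j ^ c j with hEdef
  have hE : E = Real.exp (∑ j, (c j : ℝ) * Real.log (p j)) := by
    rw [Real.exp_sum]
    refine Finset.prod_congr rfl fun j _ => ?_
    rcases Nat.eq_zero_or_pos (c j) with h0 | hpos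
    · simp [h0]
    · have hpj : 0 < p j := by
        apply div_pos _ hn'
        exact_mod_cast hpos
      rw [Real.exp_nat_mul, Real.exp_log hpj]
  have hEpos : 0 < E := by rw [hE]; exact Real.exp_pos _
  set A : ℝ := Real.exp ((n : ℝ) * (-∑ j, ((c j : ℝ) / n) * Real.log ((c j : ℝ) / n))) with hAdef
  have hA : A = E⁻¹ := by
    rw [hAdef, hE, ← Real.exp_neg]
    congr 1
    rw [mul_neg, neg_inj, Finset.mul_sum]
    refine Finset.sum_congr rfl fun j _ => ?_
    rw [← mul_assoc, hnp j]
  -- product over fibers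
  have prodfib : ∀ x : Fin n → Fin k,
      ∏ i, p (x i) = ∏ j, p j ^ (univ.filter (fun i => x i = j)).card := by
    intro x
    rw [← Finset.prod_fiberwise_of_maps_to (g := x) (t := univ) (fun i _ => mem_univ (x i))
        (fun i => p (x i))]
    refine Finset.prod_congr rfl fun j _ => ?_
    rw [Finset.prod_congr rfl (fun i hi => by rw [(Finset.mem_filter.mp hi).2] :
        ∀ i ∈ univ.filter (fun i => x i = j), p (x i) = p j), Finset.prod_const]
  have hPnonneg : ∀ x : Fin n → Fin k, 0 ≤ ∏ i, p (x i) :=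
    fun x => Finset.prod_nonneg fun i _ => hpnonneg _
  -- total sum is 1
  have hsum1 : ∑ x : Fin n → Fin k, ∏ i, p (x i) = 1 := by
    have h := Finset.prod_univ_sum (fun _ : Fin n => (univ : Finset (Fin k)))
      (fun _ j => p j)
    rw [Fintype.piFinset_univ] at h
    rw [← h]
    simp [hpsum]
  set S := univ.filter
      (fun x : Fin n → Fin k => ∀ j, (univ.filter (fun i => x i = j)).card = c j) with hSdef
  have hSsum : ∑ x ∈ S, ∏ i, p (x i) = (S.card : ℝ) * E := by
    rw [Finset.sum_congr rfl (fun x hx => ?_), Finset.sum_const, nsmul_eq_mul]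
    have hx' := (Finset.mem_filter.mp hx).2
    rw [prodfib x, hEdef]
    exact Finset.prod_congr rfl fun j _ => by rw [hx' j]
  -- Upper bound
  have hupper : (S.card : ℝ) * E ≤ 1 := by
    rw [← hSsum, ← hsum1]
    exact Finset.sum_le_sum_of_subset_of_nonneg (Finset.subset_univ S)
      (fun x _ _ => hPnonneg x)
  have hub : (S.card : ℝ) ≤ A := by
    rw [hA]
    calc (S.card : ℝ) = (S.card : ℝ) * E * E⁻¹ := by field_simp
      _ ≤ 1 * E⁻¹ := mul_le_mul_of_nonneg_right hupper (inv_nonneg.mpr hEpos.le)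
      _ = E⁻¹ := one_mul _
  -- representative for c
  have hc_card : Fintype.card (Σ j : Fin k, Fin (c j)) = Fintype.card (Fin n) := by
    simp [Fintype.card_sigma, hc]
  let eqv : Fin n ≃ (Σ j : Fin k, Fin (c j)) := Fintype.equivOfCardEq hc_card.symm
  set xc : Fin n → Fin k := fun i => (eqv i).1 with hxc
  have hxc_count : ∀ j, (univ.filter (fun i => xc i = j)).card = c j := by
    intro j
    rw [← Fintype.card_subtype]
    have e2 : {s : (Σ j' : Fin k, Fin (c j')) // s.1 = j} ≃ Fin (c j) :=
      { toFun := fun s => Fin.cast (congrArg c s.2) s.1.2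
        invFun := fun a => ⟨⟨j, a⟩, rfl⟩
        left_inv := fun s => by
          obtain ⟨⟨j', a⟩, h⟩ := s
          subst h
          rfl
        right_inv := fun a => rfl }
    have e3 : {i // xc i = j} ≃ {s : (Σ j' : Fin k, Fin (c j')) // s.1 = j} :=
      eqv.subtypeEquiv fun i => Iff.rfl
    rw [Fintype.card_congr (e3.trans e2), Fintype.card_fin]
  have hTfact : S.card * ∏ j, (c j).factorial = n.factorial := by
    have h := card_type_class_mul xc
    have hSeq : S = univ.filter (fun x : Fin n → Fin k =>
        ∀ j, (univ.filter (fun i => x i = j)).card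
          = (univ.filter (fun i => xc i = j)).card) := by
      apply Finset.filter_congr
      intro x _
      constructor
      · intro h j; rw [h j, hxc_count j]
      · intro h j; rw [h j, hxc_count j]
    rw [hSeq]
    rw [Finset.prod_congr rfl (fun j _ => by rw [hxc_count j] :
        ∀ j ∈ univ, ((univ.filter (fun i => xc i = j)).card).factorial = (c j).factorial)] at h
    exact h
  -- grouping by count vector
  set ct : (Fin n → Fin k) → (Fin k → Fin (n+1)) := fun x j =>
    ⟨(univ.filter (fun i => x i = j)).card, by
      have h1 : (univ.filter (fun i => x i = j)).card ≤ (univ : Finset (Fin n)).card :=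
        Finset.card_filter_le _ _
      simp only [Finset.card_univ, Fintype.card_fin] at h1
      omega⟩ with hct
  have hgroup : (1:ℝ) = ∑ d : Fin k → Fin (n+1),
      ∑ x ∈ univ.filter (fun x => ct x = d), ∏ i, p (x i) := by
    rw [← hsum1]
    exact (Finset.sum_fiberwise_of_maps_to (fun x _ => mem_univ (ct x)) _).symm
  have hinner : ∀ d : Fin k → Fin (n+1),
      ∑ x ∈ univ.filter (fun x => ct x = d), ∏ i, p (x i) ≤ (S.card : ℝ) * E := by
    intro d
    rcases Finset.eq_empty_or_nonempty (univ.filter (fun x => ct x = d)) with hemp | ⟨x0, hx0⟩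
    · rw [hemp, Finset.sum_empty]
      positivity
    · have hx0' : ct x0 = d := (Finset.mem_filter.mp hx0).2
      set e : Fin k → ℕ := fun j => (univ.filter (fun i => x0 i = j)).card with he
      have hclass : univ.filter (fun x => ct x = d)
          = univ.filter (fun x : Fin n → Fin k =>
              ∀ j, (univ.filter (fun i => x i = j)).card = e j) := by
        apply Finset.filter_congr
        intro x _
        constructor
        · intro h j
          have := congrFun h j
          rw [← hx0'] at this
          exact congrArg Fin.val this
        · intro h
          funext j
          rw [← hx0']
          exact Fin.ext (h j)
      set Ne : ℕ := (univ.filter (fun x : Fin n → Fin k =>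
          ∀ j, (univ.filter (fun i => x i = j)).card = e j)).card with hNe
      set F : ℝ := ∏ j, p j ^ e j with hF
      have hsum_inner : ∑ x ∈ univ.filter (fun x => ct x = d), ∏ i, p (x i)
          = (Ne : ℝ) * F := by
        rw [hclass]
        rw [Finset.sum_congr rfl (fun x hx => ?_), Finset.sum_const, nsmul_eq_mul]
        have hx' := (Finset.mem_filter.mp hx).2
        rw [prodfib x, hF]
        exact Finset.prod_congr rfl fun j _ => by rw [hx' j]
      rw [hsum_inner]
      -- key identities
      have hNefact : Ne * ∏ j, (e j).factorial = n.factorial := card_type_class_mul x0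
      have hesum : ∑ j, e j = n := by
        have := Finset.card_eq_sum_card_fiberwise
          (f := x0) (s := univ) (t := univ) (fun i _ => mem_univ (x0 i))
        simp only [Finset.card_univ, Fintype.card_fin] at this
        rw [he]
        exact this.symm
      -- main comparison: F * ∏ c! ≤ E * ∏ e!
      have hkey : F * ∏ j, ((c j).factorial : ℝ) ≤ E * ∏ j, ((e j).factorial : ℝ) := by
        have hterm : ∀ j ∈ univ, ((c j:ℝ)) ^ (e j) * ((c j).factorial : ℝ)
            ≤ ((c j:ℝ)) ^ (c j) * ((e j).factorial : ℝ) := by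
          intro j _
          exact_mod_cast pow_factorial_cross (c j) (e j)
        have hmain := Finset.prod_le_prod (fun j _ => by positivity) hterm
        have h1 : ∏ j, (((c j:ℝ)) ^ (e j) * ((c j).factorial : ℝ))
            = (n:ℝ)^n * (F * ∏ j, ((c j).factorial : ℝ)) := by
          rw [Finset.prod_mul_distrib]
          have : ∏ j, ((c j:ℝ)) ^ (e j) = (n:ℝ)^n * F := by
            rw [hF]
            rw [Finset.prod_congr rfl (fun j _ => by rw [← hnp j] :
              ∀ j ∈ univ, ((c j:ℝ)) ^ (e j) = ((n:ℝ) * p j) ^ (e j))]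
            simp only [mul_pow]
            rw [Finset.prod_mul_distrib, Finset.prod_pow_eq_pow_sum, hesum]
          rw [this]; ring
        have h2 : ∏ j, (((c j:ℝ)) ^ (c j) * ((e j).factorial : ℝ))
            = (n:ℝ)^n * (E * ∏ j, ((e j).factorial : ℝ)) := by
          rw [Finset.prod_mul_distrib]
          have : ∏ j, ((c j:ℝ)) ^ (c j) = (n:ℝ)^n * E := by
            rw [hEdef]
            rw [Finset.prod_congr rfl (fun j _ => by rw [← hnp j] :
              ∀ j ∈ univ, ((c j:ℝ)) ^ (c j) = ((n:ℝ) * p j) ^ (c j))]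
            simp only [mul_pow]
            rw [Finset.prod_mul_distrib, Finset.prod_pow_eq_pow_sum, hc]
          rw [this]; ring
        rw [h1, h2] at hmain
        have hnn : (0:ℝ) < (n:ℝ)^n := by positivity
        exact le_of_mul_le_mul_left hmain hnn
      -- conclude Ne * F ≤ S.card * E
      have hfactpos : (0:ℝ) < (∏ j, ((e j).factorial : ℝ)) * ∏ j, ((c j).factorial : ℝ) := by
        apply mul_pos
        · exact Finset.prod_pos fun j _ => by exact_mod_cast (e j).factorial_pos
        · exact Finset.prod_pos fun j _ => by exact_mod_cast (c j).factorial_pos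
      have hNefact' : (Ne : ℝ) * ∏ j, ((e j).factorial : ℝ) = (n.factorial : ℝ) := by
        exact_mod_cast congrArg (Nat.cast : ℕ → ℝ) hNefact
      have hTfact' : (S.card : ℝ) * ∏ j, ((c j).factorial : ℝ) = (n.factorial : ℝ) := by
        exact_mod_cast congrArg (Nat.cast : ℕ → ℝ) hTfact
      have hmul : ((Ne : ℝ) * F) * ((∏ j, ((e j).factorial : ℝ)) * ∏ j, ((c j).factorial : ℝ))
          ≤ ((S.card : ℝ) * E) * ((∏ j, ((e j).factorial : ℝ)) * ∏ j, ((c j).factorial : ℝ)) := by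
        calc ((Ne : ℝ) * F) * ((∏ j, ((e j).factorial : ℝ)) * ∏ j, ((c j).factorial : ℝ))
            = ((Ne : ℝ) * ∏ j, ((e j).factorial : ℝ)) * (F * ∏ j, ((c j).factorial : ℝ)) := by
              ring
          _ = (n.factorial : ℝ) * (F * ∏ j, ((c j).factorial : ℝ)) := by rw [hNefact']
          _ ≤ (n.factorial : ℝ) * (E * ∏ j, ((e j).factorial : ℝ)) := by
              apply mul_le_mul_of_nonneg_left hkey (by positivity)
          _ = ((S.card : ℝ) * ∏ j, ((c j).factorial : ℝ)) * (E * ∏ j, ((e j).factorial : ℝ)) := by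
              rw [hTfact']
          _ = ((S.card : ℝ) * E) * ((∏ j, ((e j).factorial : ℝ)) * ∏ j, ((c j).factorial : ℝ)) := by
              ring
      exact le_of_mul_le_mul_right hmul hfactpos
  -- lower bound
  have hcount : (Fintype.card (Fin k → Fin (n+1)) : ℝ) = ((n:ℝ)+1)^k := by
    rw [Fintype.card_fun, Fintype.card_fin, Fintype.card_fin]
    push_cast
    ring
  have hlow1 : (1:ℝ) ≤ ((n:ℝ)+1)^k * ((S.card : ℝ) * E) := by
    calc (1:ℝ) = ∑ d : Fin k → Fin (n+1),
          ∑ x ∈ univ.filter (fun x => ct x = d), ∏ i, p (x i) := hgroup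
      _ ≤ ∑ _d : Fin k → Fin (n+1), (S.card : ℝ) * E :=
          Finset.sum_le_sum fun d _ => hinner d
      _ = (Fintype.card (Fin k → Fin (n+1)) : ℝ) * ((S.card : ℝ) * E) := by
          rw [Finset.sum_const, nsmul_eq_mul]
          simp
      _ = ((n:ℝ)+1)^k * ((S.card : ℝ) * E) := by rw [hcount]
  have hlb : ((n : ℝ) + 1)⁻¹ ^ k * A ≤ (S.card : ℝ) := by
    rw [hA, inv_pow]
    have hpos : (0:ℝ) < ((n:ℝ)+1)^k := by positivity
    calc (((n:ℝ)+1)^k)⁻¹ * E⁻¹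
        = (((n:ℝ)+1)^k)⁻¹ * E⁻¹ * 1 := by ring
      _ ≤ (((n:ℝ)+1)^k)⁻¹ * E⁻¹ * (((n:ℝ)+1)^k * ((S.card : ℝ) * E)) := by
          apply mul_le_mul_of_nonneg_left hlow1 (by positivity)
      _ = (S.card : ℝ) := by field_simp
  exact ⟨hlb, hub⟩
end

section
/- (Pythagorean inequality for I-projection) If P* is the I-projection of a strictly positive P onto a closed convex set E in the simplex over a finite alphabet, then for every Q ∈ E, D(Q‖P) ≥ D(Q‖P*) + D(P*‖P). -/
open Finset

/-- KL divergence on a finite alphabet (convention `0 log 0 = 0` holds automatically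
since `Real.log 0 = 0`). -/
noncomputable def klDiv' {k : ℕ} (Q P : Fin k → ℝ) : ℝ :=
  ∑ x, Q x * Real.log (Q x / P x)

/-- The probability simplex on `Fin k`. -/
def simplex (k : ℕ) : Set (Fin k → ℝ) :=
  {Q | (∀ x, 0 ≤ Q x) ∧ ∑ x, Q x = 1}

private lemma klDiv'_expand {k : ℕ} (R P : Fin k → ℝ) (hR : ∀ x, 0 ≤ R x)
    (hP : ∀ x, 0 < P x) :
    klDiv' R P = ∑ x, (R x * Real.log (R x) - R x * Real.log (P x)) := by
  unfold klDiv'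
  refine Finset.sum_congr rfl fun x _ => ?_
  rcases eq_or_lt_of_le (hR x) with h | h
  · simp [← h]
  · rw [Real.log_div (ne_of_gt h) (ne_of_gt (hP x))]; ring

private lemma mul_log_le_aux (s q t : ℝ) (hs : 0 ≤ s) (hq : 0 ≤ q) (hsupp : s = 0 → q = 0)
    (ht : 0 < t) (ht1 : t < 1) :
    (s + t * (q - s)) * Real.log (s + t * (q - s)) - s * Real.log s
      ≤ t * (q - s) * (Real.log s + 1) + t ^ 2 * ((q - s) ^ 2 / s) := by
  rcases eq_or_lt_of_le hs with h | h
  · have hq0 : q = 0 := hsupp h.symm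
    simp [← h, hq0]
  · set u := s + t * (q - s) with hu_def
    have hu : 0 < u := by nlinarith
    have hlog : Real.log (u / s) ≤ u / s - 1 :=
      Real.log_le_sub_one_of_pos (div_pos hu h)
    have h2 : u * Real.log (u / s) ≤ u * (u / s - 1) :=
      mul_le_mul_of_nonneg_left hlog hu.le
    have h3 : Real.log (u / s) = Real.log u - Real.log s := Real.log_div hu.ne' h.ne'
    have h4 : u * (u / s - 1) = t ^ 2 * ((q - s) ^ 2 / s) + t * (q - s) := by
      field_simp
      ring
    rw [h3, h4] at h2
    have h5 : u * Real.log u - s * Real.log s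
        = u * (Real.log u - Real.log s) + t * (q - s) * Real.log s := by
      rw [hu_def]; ring
    linarith

/-- Csiszár's Pythagorean inequality: if `P⋆` is the I-projection of the
strictly positive `P` onto the nonempty closed convex `E ⊆ Δ(𝒳)`, then for every
`Q ∈ E`, `D(Q‖P) ≥ D(Q‖P⋆) + D(P⋆‖P)`. -/
theorem I_projection_pythagorean_inequality
    (k : ℕ) (P : Fin k → ℝ) (hP : ∀ x, 0 < P x) (hPsum : ∑ x, P x = 1)
    (E : Set (Fin k → ℝ)) (hE : E.Nonempty) (hEsub : E ⊆ simplex k)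
    (hEclosed : IsClosed E) (hEconv : Convex ℝ E)
    (Pstar : Fin k → ℝ) (hPstarE : Pstar ∈ E)
    (hmin : ∀ Q ∈ E, klDiv' Pstar P ≤ klDiv' Q P) :
    ∀ Q ∈ E, klDiv' Q Pstar + klDiv' Pstar P ≤ klDiv' Q P := by
  intro Q hQ
  obtain ⟨hQ0, hQ1⟩ := hEsub hQ
  obtain ⟨hS0, hS1⟩ := hEsub hPstarE
  -- membership of the segment in E
  have hmem : ∀ t : ℝ, 0 < t → t < 1 →
      (fun x => Pstar x + t * (Q x - Pstar x)) ∈ E := by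
    intro t ht0 ht1
    have h := hEconv hPstarE hQ (by linarith : (0:ℝ) ≤ 1 - t) ht0.le (by ring)
    convert h using 1
    funext x
    simp only [Pi.add_apply, Pi.smul_apply, smul_eq_mul]
    ring
  -- basic nonnegativity consequence of minimality
  have hF : ∀ t : ℝ, 0 < t → t < 1 →
      0 ≤ ∑ x, ((Pstar x + t * (Q x - Pstar x)) * Real.log (Pstar x + t * (Q x - Pstar x))
            - Pstar x * Real.log (Pstar x))
          - t * ∑ x, (Q x - Pstar x) * Real.log (P x) := by
    intro t ht0 ht1
    have h1 := hmin _ (hmem t ht0 ht1)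
    have hu0 : ∀ x, 0 ≤ Pstar x + t * (Q x - Pstar x) := by
      intro x; have h2 := hS0 x; have h3 := hQ0 x; nlinarith
    rw [klDiv'_expand (fun x => Pstar x + t * (Q x - Pstar x)) P hu0 hP,
        klDiv'_expand Pstar P hS0 hP] at h1
    have heq : ∑ x, ((Pstar x + t * (Q x - Pstar x)) * Real.log (Pstar x + t * (Q x - Pstar x))
            - Pstar x * Real.log (Pstar x))
          - t * ∑ x, (Q x - Pstar x) * Real.log (P x)
        = ∑ x, ((Pstar x + t * (Q x - Pstar x)) * Real.log (Pstar x + t * (Q x - Pstar x))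
            - (Pstar x + t * (Q x - Pstar x)) * Real.log (P x))
          - ∑ x, (Pstar x * Real.log (Pstar x) - Pstar x * Real.log (P x)) := by
      rw [Finset.mul_sum, ← Finset.sum_sub_distrib, ← Finset.sum_sub_distrib]
      exact Finset.sum_congr rfl fun x _ => by ring
    rw [heq]
    linarith
  -- Step A : support of Q is contained in support of Pstar
  have hsupp : ∀ x, Pstar x = 0 → Q x = 0 := by
    by_contra hbad
    push_neg at hbad
    obtain ⟨x0, hx0s, hx0q⟩ := hbad
    have hq0 : 0 < Q x0 := (hQ0 x0).lt_of_ne (Ne.symm hx0q)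
    set A : ℝ := ∑ x, (Q x * Real.log (Q x) - Pstar x * Real.log (Pstar x))
        - ∑ x, (Q x - Pstar x) * Real.log (P x) with hA
    have key : ∀ t : ℝ, 0 < t → t < 1 → 0 ≤ A + Q x0 * Real.log t := by
      intro t ht0 ht1
      have hFt := hF t ht0 ht1
      have chord : ∀ x ∈ Finset.univ.erase x0,
          (Pstar x + t * (Q x - Pstar x)) * Real.log (Pstar x + t * (Q x - Pstar x))
            - Pstar x * Real.log (Pstar x)
          ≤ t * (Q x * Real.log (Q x) - Pstar x * Real.log (Pstar x)) := by
        intro x _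
        have hconv := Real.convexOn_mul_log.2 (Set.mem_Ici.mpr (hS0 x))
          (Set.mem_Ici.mpr (hQ0 x)) (by linarith : (0:ℝ) ≤ 1 - t) ht0.le (by ring)
        simp only [smul_eq_mul] at hconv
        have heq : (1 - t) * Pstar x + t * Q x = Pstar x + t * (Q x - Pstar x) := by ring
        rw [heq] at hconv
        nlinarith [hconv]
      have hx0 : (Pstar x0 + t * (Q x0 - Pstar x0)) * Real.log (Pstar x0 + t * (Q x0 - Pstar x0))
            - Pstar x0 * Real.log (Pstar x0)
          = t * Q x0 * Real.log t
            + t * (Q x0 * Real.log (Q x0) - Pstar x0 * Real.log (Pstar x0)) := by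
        rw [hx0s]
        have : (0:ℝ) + t * (Q x0 - 0) = t * Q x0 := by ring
        rw [this, Real.log_mul ht0.ne' hq0.ne']
        ring
      have hsum : ∑ x, ((Pstar x + t * (Q x - Pstar x)) * Real.log (Pstar x + t * (Q x - Pstar x))
            - Pstar x * Real.log (Pstar x))
          ≤ t * Q x0 * Real.log t
            + t * ∑ x, (Q x * Real.log (Q x) - Pstar x * Real.log (Pstar x)) := by
        rw [← Finset.sum_erase_add Finset.univ _ (Finset.mem_univ x0),
            ← Finset.sum_erase_add Finset.univ
              (fun x => Q x * Real.log (Q x) - Pstar x * Real.log (Pstar x))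
              (Finset.mem_univ x0), mul_add]
        have h6 := Finset.sum_le_sum chord
        have h6' : ∑ x ∈ Finset.univ.erase x0,
            ((Pstar x + t * (Q x - Pstar x)) * Real.log (Pstar x + t * (Q x - Pstar x))
              - Pstar x * Real.log (Pstar x))
            ≤ t * ∑ x ∈ Finset.univ.erase x0,
                (Q x * Real.log (Q x) - Pstar x * Real.log (Pstar x)) := by
          rw [Finset.mul_sum]; exact h6
        linarith [h6', hx0.le]
      have h7 : 0 ≤ t * (A + Q x0 * Real.log t) := by
        have : t * (A + Q x0 * Real.log t)
            = t * Q x0 * Real.log t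
              + t * ∑ x, (Q x * Real.log (Q x) - Pstar x * Real.log (Pstar x))
              - t * ∑ x, (Q x - Pstar x) * Real.log (P x) := by
          rw [hA]; ring
        linarith
      nlinarith [h7]
    -- choose explicit small t to get contradiction
    set t0 : ℝ := min (1/2) (Real.exp (-(A + 1) / Q x0)) with ht0def
    have h1 : 0 < t0 := lt_min (by norm_num) (Real.exp_pos _)
    have h2 : t0 < 1 := lt_of_le_of_lt (min_le_left _ _) (by norm_num)
    have h3 : Real.log t0 ≤ -(A + 1) / Q x0 := by
      calc Real.log t0 ≤ Real.log (Real.exp (-(A + 1) / Q x0)) := by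
            apply Real.log_le_log h1 (min_le_right _ _)
        _ = -(A + 1) / Q x0 := Real.log_exp _
    have h4 := key t0 h1 h2
    have h5 : Q x0 * Real.log t0 ≤ -(A + 1) := by
      have h6 := mul_le_mul_of_nonneg_left h3 hq0.le
      rwa [mul_div_cancel₀ _ hq0.ne'] at h6
    linarith
  -- Main step : the linearized quantity L is nonnegative
  set L : ℝ := ∑ x, (Q x - Pstar x) * (Real.log (Pstar x) + 1)
      - ∑ x, (Q x - Pstar x) * Real.log (P x) with hLdef
  set K : ℝ := ∑ x, (Q x - Pstar x) ^ 2 / Pstar x with hKdef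
  have hK0 : 0 ≤ K := Finset.sum_nonneg fun x _ => div_nonneg (sq_nonneg _) (hS0 x)
  have hLg : ∀ t : ℝ, 0 < t → t < 1 → 0 ≤ L + t * K := by
    intro t ht0 ht1
    have hFt := hF t ht0 ht1
    have hb : ∀ x ∈ Finset.univ,
        (Pstar x + t * (Q x - Pstar x)) * Real.log (Pstar x + t * (Q x - Pstar x))
          - Pstar x * Real.log (Pstar x)
        ≤ t * (Q x - Pstar x) * (Real.log (Pstar x) + 1)
          + t ^ 2 * ((Q x - Pstar x) ^ 2 / Pstar x) :=
      fun x _ => mul_log_le_aux (Pstar x) (Q x) t (hS0 x) (hQ0 x) (hsupp x) ht0 ht1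
    have hsum := Finset.sum_le_sum hb
    rw [Finset.sum_add_distrib] at hsum
    have e1 : ∑ x, t * (Q x - Pstar x) * (Real.log (Pstar x) + 1)
        = t * ∑ x, (Q x - Pstar x) * (Real.log (Pstar x) + 1) := by
      rw [Finset.mul_sum]; exact Finset.sum_congr rfl fun x _ => by ring
    have e2 : ∑ x, t ^ 2 * ((Q x - Pstar x) ^ 2 / Pstar x) = t ^ 2 * K := by
      rw [hKdef, Finset.mul_sum]
    rw [e1, e2] at hsum
    have h7 : 0 ≤ t * (L + t * K) := by
      have : t * (L + t * K)
          = t * ∑ x, (Q x - Pstar x) * (Real.log (Pstar x) + 1) + t ^ 2 * K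
            - t * ∑ x, (Q x - Pstar x) * Real.log (P x) := by
        rw [hLdef]; ring
      linarith
    nlinarith [h7]
  have hL0 : 0 ≤ L := by
    by_contra hneg
    push_neg at hneg
    set t : ℝ := min (1/2) (-L / (2 * (K + 1))) with htdef
    have htpos : 0 < t := lt_min (by norm_num) (div_pos (by linarith) (by linarith))
    have ht1 : t < 1 := lt_of_le_of_lt (min_le_left _ _) (by norm_num)
    have h5 := hLg t htpos ht1
    have h6 : t ≤ -L / (2 * (K + 1)) := min_le_right _ _
    have h7 : t * K ≤ -L / 2 := by
      have h8 : t * (K + 1) ≤ (-L / (2 * (K + 1))) * (K + 1) :=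
        mul_le_mul_of_nonneg_right h6 (by linarith)
      have h9 : (-L / (2 * (K + 1))) * (K + 1) = -L / 2 := by
        field_simp
      nlinarith
    linarith
  -- Step D : identify L with the divergence difference
  have hsum0 : ∑ x, (Q x - Pstar x) = 0 := by
    rw [Finset.sum_sub_distrib, hQ1, hS1]; ring
  have hD : L = klDiv' Q P - klDiv' Q Pstar - klDiv' Pstar P := by
    have hpt : ∀ x, (Q x - Pstar x) * (Real.log (Pstar x) + 1)
          - (Q x - Pstar x) * Real.log (P x)
        = (Q x * Real.log (Q x / P x) - Q x * Real.log (Q x / Pstar x)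
            - Pstar x * Real.log (Pstar x / P x)) + (Q x - Pstar x) := by
      intro x
      rcases eq_or_lt_of_le (hS0 x) with hs | hs
      · have hq : Q x = 0 := hsupp x hs.symm
        simp [← hs, hq]
      rcases eq_or_lt_of_le (hQ0 x) with hq | hq
      · rw [← hq]
        rw [Real.log_div hs.ne' (hP x).ne']
        simp
        ring
      · rw [Real.log_div hq.ne' (hP x).ne', Real.log_div hq.ne' hs.ne',
          Real.log_div hs.ne' (hP x).ne']
        ring
    unfold klDiv'
    rw [hLdef, ← Finset.sum_sub_distrib, ← Finset.sum_sub_distrib, ← Finset.sum_sub_distrib]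
    rw [Finset.sum_congr rfl fun x _ => hpt x, Finset.sum_add_distrib, hsum0, add_zero]
  linarith
end

section
/- Let X_1, X_2, ... be i.i.d. Bernoulli(θ) with 0 < θ < 3/4, and condition on the event E_n = {(1/n)∑_{i=1}^n X_i ≥ 3/4}. Then Pr(X_1 = 1 | E_n) → 3/4 as n → ∞; i.e., the conditional law of X_1 converges to Bernoulli(3/4), the I-projection of Bernoulli(θ) onto {Q : E_Q[X] ≥ 3/4}. -/
open Finset Filter
open scoped Topology


noncomputable def bq (θ : ℝ) (n k : ℕ) : ℝ := (n.choose k : ℝ) * θ ^ k * (1 - θ) ^ (n - k)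

lemma bq_nonneg {θ : ℝ} (h0 : 0 < θ) (h1 : θ < 1) (n k : ℕ) : 0 ≤ bq θ n k := by
  have : (0:ℝ) < 1 - θ := by linarith
  unfold bq
  positivity

lemma bq_pos {θ : ℝ} (h0 : 0 < θ) (h1 : θ < 1) {n k : ℕ} (hk : k ≤ n) : 0 < bq θ n k := by
  have h2 : (0:ℝ) < 1 - θ := by linarith
  have h3 := Nat.choose_pos hk
  unfold bq
  positivity

lemma bq_succ_le {θ : ℝ} (h0 : 0 < θ) (h34 : θ < 3 / 4) {n k : ℕ} (hk : (3 / 4 : ℝ) * n ≤ k) :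
    bq θ n (k + 1) ≤ (θ / (3 * (1 - θ))) * bq θ n k := by
  have h1 : 0 < 1 - θ := by linarith
  set r : ℝ := θ / (3 * (1 - θ)) with hrdef
  have hr0 : 0 ≤ r := by positivity
  have hreq : 3 * (1 - θ) * r = θ := by
    rw [hrdef]; field_simp
  rcases le_or_gt n k with hnk | hnk
  · have : n.choose (k + 1) = 0 := Nat.choose_eq_zero_of_lt (by omega)
    rw [bq, this]
    simp only [Nat.cast_zero, zero_mul]
    exact mul_nonneg hr0 (bq_nonneg h0 (by linarith) n k)
  · have hcast : ((n - k : ℕ) : ℝ) = (n : ℝ) - k := by rw [Nat.cast_sub hnk.le]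
    have hc : (n.choose (k + 1) : ℝ) * (k + 1) = (n.choose k : ℝ) * ((n : ℝ) - k) := by
      rw [← hcast]
      exact_mod_cast congrArg (Nat.cast (R := ℝ)) (Nat.choose_succ_right_eq n k)
    have hpow : (1 - θ) ^ (n - k) = (1 - θ) ^ (n - (k + 1)) * (1 - θ) := by
      rw [← pow_succ]; congr 1; omega
    have hid : ((k : ℝ) + 1) * (1 - θ) * bq θ n (k + 1) = ((n : ℝ) - k) * θ * bq θ n k := by
      unfold bq
      rw [hpow, pow_succ]
      linear_combination (θ ^ k * θ * (1 - θ) ^ (n - (k + 1)) * (1 - θ)) * hc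
    have h3 : 3 * ((n : ℝ) - k) ≤ (k : ℝ) + 1 := by linarith
    have hq : 0 ≤ bq θ n k := bq_nonneg h0 (by linarith) n k
    have ha : (0:ℝ) ≤ ((k:ℝ) + 1) - 3 * ((n:ℝ) - k) := by linarith
    have hb : (0:ℝ) ≤ (1 - θ) * r * bq θ n k := by positivity
    have hprod : (0:ℝ) ≤ (((k:ℝ) + 1) - 3 * ((n:ℝ) - k)) * ((1 - θ) * r * bq θ n k) :=
      mul_nonneg ha hb
    have hsub := congrArg (fun t : ℝ => ((n:ℝ) - k) * t * bq θ n k) hreq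
    have hsub : ((n:ℝ) - k) * (3 * (1 - θ) * r) * bq θ n k = ((n:ℝ) - k) * θ * bq θ n k := hsub
    have key : ((k : ℝ) + 1) * (1 - θ) * bq θ n (k + 1)
        ≤ ((k : ℝ) + 1) * (1 - θ) * (r * bq θ n k) := by
      nlinarith [hid, hsub, hprod]
    exact (mul_le_mul_iff_right₀ (by positivity : (0:ℝ) < ((k : ℝ) + 1) * (1 - θ))).mp key

lemma bq_add_le {θ : ℝ} (h0 : 0 < θ) (h34 : θ < 3 / 4) {n m : ℕ} (hm : (3 / 4 : ℝ) * n ≤ m) (j : ℕ) :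
    bq θ n (m + j) ≤ (θ / (3 * (1 - θ))) ^ j * bq θ n m := by
  have h1 : 0 < 1 - θ := by linarith
  have hr0 : (0:ℝ) ≤ θ / (3 * (1 - θ)) := by positivity
  induction j with
  | zero => simp
  | succ j ih =>
    have hstep : bq θ n (m + j + 1) ≤ (θ / (3 * (1 - θ))) * bq θ n (m + j) := by
      refine bq_succ_le h0 h34 ?_
      have : (m : ℝ) ≤ ((m + j : ℕ) : ℝ) := by push_cast; linarith [Nat.cast_nonneg (α := ℝ) j]
      linarith
    calc bq θ n (m + (j + 1)) = bq θ n (m + j + 1) := by ring_nf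
      _ ≤ (θ / (3 * (1 - θ))) * bq θ n (m + j) := hstep
      _ ≤ (θ / (3 * (1 - θ))) * ((θ / (3 * (1 - θ))) ^ j * bq θ n m) :=
          mul_le_mul_of_nonneg_left ih hr0
      _ = (θ / (3 * (1 - θ))) ^ (j + 1) * bq θ n m := by ring

lemma prod_ite_eq_pow (n : ℕ) (θ : ℝ) (x : Fin n → Bool) :
    ∏ i, (if x i then θ else 1 - θ)
      = θ ^ (univ.filter (fun i => x i = true)).card
        * (1 - θ) ^ (n - (univ.filter (fun i => x i = true)).card) := by
  rw [← Finset.prod_filter_mul_prod_filter_not univ (fun i => x i = true)]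
  congr 1
  · rw [Finset.prod_congr rfl (g := fun _ => θ) (fun i hi => by
      simp only [mem_filter] at hi; simp [hi.2]), prod_const]
  · rw [Finset.prod_congr rfl (g := fun _ => 1 - θ) (fun i hi => by
      simp only [mem_filter] at hi; simp [hi.2]), prod_const]
    congr 1
    have := Finset.card_filter_add_card_filter_not (s := (univ : Finset (Fin n)))
      (p := fun i => x i = true)
    simp only [Finset.card_univ, Fintype.card_fin] at this
    omega

lemma sum_boolfun (n : ℕ) (P : Finset (Fin n) → Prop) [DecidablePred P]
    (g : Finset (Fin n) → ℝ) :
    ∑ x ∈ univ.filter (fun x : Fin n → Bool => P (univ.filter (fun i => x i = true))),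
      g (univ.filter (fun i => x i = true))
    = ∑ s ∈ univ.filter P, g s := by
  apply Finset.sum_nbij' (i := fun x : Fin n → Bool => univ.filter (fun i => x i = true))
    (j := fun (s : Finset (Fin n)) (i : Fin n) => decide (i ∈ s))
  · intro x hx; simp only [mem_filter, mem_univ, true_and] at hx ⊢; exact hx
  · intro s hs; simp only [mem_filter, mem_univ, true_and] at hs ⊢
    convert hs using 2
    ext i; simp
  · intro x _; funext i; simp
  · intro s _; ext i; simp
  · intro x _; rfl

lemma sym_sum (n : ℕ) (F : ℕ → ℝ) (P : ℕ → Prop) [DecidablePred P] (i j : Fin n) :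
    ∑ s ∈ univ.filter (fun s : Finset (Fin n) => P s.card), (if i ∈ s then F s.card else 0)
  = ∑ s ∈ univ.filter (fun s : Finset (Fin n) => P s.card), (if j ∈ s then F s.card else 0) := by
  apply Finset.sum_equiv (Equiv.finsetCongr (Equiv.swap i j))
  · intro s
    simp [Equiv.finsetCongr_apply, Finset.card_map]
  · intro s hs
    simp only [Equiv.finsetCongr_apply, Finset.card_map]
    congr 1
    simp only [Finset.mem_map_equiv, eq_iff_iff]
    rw [Equiv.symm_swap, Equiv.swap_apply_right]

lemma card_mul_sum (n : ℕ) (F : ℕ → ℝ) (P : ℕ → Prop) [DecidablePred P] (hn : 0 < n) :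
    ∑ s ∈ univ.filter (fun s : Finset (Fin n) => P s.card), (s.card : ℝ) * F s.card
  = n * ∑ s ∈ univ.filter (fun s : Finset (Fin n) => P s.card),
      (if (⟨0, hn⟩ : Fin n) ∈ s then F s.card else 0) := by
  calc ∑ s ∈ univ.filter (fun s : Finset (Fin n) => P s.card), (s.card : ℝ) * F s.card
      = ∑ s ∈ univ.filter (fun s : Finset (Fin n) => P s.card),
          ∑ i : Fin n, (if i ∈ s then F s.card else 0) := by
        refine Finset.sum_congr rfl fun s _ => ?_
        rw [Finset.sum_ite_mem, univ_inter, Finset.sum_const, nsmul_eq_mul]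
    _ = ∑ i : Fin n, ∑ s ∈ univ.filter (fun s : Finset (Fin n) => P s.card),
          (if i ∈ s then F s.card else 0) := Finset.sum_comm
    _ = ∑ _i : Fin n, ∑ s ∈ univ.filter (fun s : Finset (Fin n) => P s.card),
          (if (⟨0, hn⟩ : Fin n) ∈ s then F s.card else 0) :=
        Finset.sum_congr rfl fun i _ => sym_sum n F P i ⟨0, hn⟩
    _ = _ := by rw [Finset.sum_const, card_univ, Fintype.card_fin, nsmul_eq_mul]

lemma group_sum (n : ℕ) (F : ℕ → ℝ) :
    ∑ s : Finset (Fin n), F s.card = ∑ k ∈ range (n + 1), (n.choose k : ℝ) * F k := by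
  rw [← Finset.powerset_univ, Finset.sum_powerset_apply_card]
  rw [card_univ, Fintype.card_fin]
  refine Finset.sum_congr rfl fun k _ => ?_
  rw [nsmul_eq_mul]

lemma tail_sum_le {θ : ℝ} (h0 : 0 < θ) (h34 : θ < 3 / 4) {n m : ℕ}
    (hm : (3 / 4 : ℝ) * n ≤ m) :
    ∑ k ∈ Icc m n, ((k:ℝ) - m) * bq θ n k
      ≤ (θ / (3 * (1 - θ))) / (1 - θ / (3 * (1 - θ))) ^ 2 * bq θ n m := by
  have h1 : (0:ℝ) < 1 - θ := by linarith
  set r : ℝ := θ / (3 * (1 - θ)) with hrdef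
  have hr0 : 0 ≤ r := by positivity
  have hr1 : r < 1 := by rw [hrdef, div_lt_one (by linarith)]; linarith
  have hqm : 0 ≤ bq θ n m := bq_nonneg h0 (by linarith) n m
  have hIcc : Icc m n = Ico m (n + 1) := by rw [Finset.Ico_add_one_right_eq_Icc]
  rw [hIcc, Finset.sum_Ico_eq_sum_range]
  calc ∑ j ∈ range (n + 1 - m), ((↑(m + j) : ℝ) - m) * bq θ n (m + j)
      = ∑ j ∈ range (n + 1 - m), (j : ℝ) * bq θ n (m + j) := by
        refine Finset.sum_congr rfl fun j _ => ?_
        push_cast; ring_nf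
    _ ≤ ∑ j ∈ range (n + 1 - m), (j : ℝ) * (r ^ j * bq θ n m) := by
        refine Finset.sum_le_sum fun j _ => ?_
        exact mul_le_mul_of_nonneg_left (bq_add_le h0 h34 hm j) (Nat.cast_nonneg j)
    _ = (∑ j ∈ range (n + 1 - m), (j : ℝ) * r ^ j) * bq θ n m := by
        rw [Finset.sum_mul]; refine Finset.sum_congr rfl fun j _ => by ring
    _ ≤ (r / (1 - r) ^ 2) * bq θ n m := by
        refine mul_le_mul_of_nonneg_right ?_ hqm
        refine sum_le_hasSum (L := SummationFilter.unconditional ℕ) _ (fun j _ => by positivity) ?_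
        have : ‖r‖ < 1 := by rw [Real.norm_eq_abs, abs_of_nonneg hr0]; exact hr1
        exact hasSum_coe_mul_geometric_of_norm_lt_one this

lemma filter_range_eq_Icc (n : ℕ) :
    (range (n + 1)).filter (fun k : ℕ => (3 / 4 : ℝ) * n ≤ (k : ℝ)) = Icc ⌈(3 / 4 : ℝ) * n⌉₊ n := by
  ext k
  simp only [mem_filter, mem_range, mem_Icc, Nat.lt_succ_iff, Nat.ceil_le]
  tauto

lemma filter_card_sum (n : ℕ) (G : ℕ → ℝ) :
    ∑ s ∈ univ.filter (fun s : Finset (Fin n) => (3 / 4 : ℝ) * n ≤ (s.card : ℝ)), G s.card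
      = ∑ k ∈ Icc ⌈(3 / 4 : ℝ) * n⌉₊ n, (n.choose k : ℝ) * G k := by
  rw [Finset.sum_filter]
  rw [group_sum n (fun k => if (3 / 4 : ℝ) * n ≤ (k : ℝ) then G k else 0)]
  rw [← filter_range_eq_Icc n, Finset.sum_filter]
  refine Finset.sum_congr rfl fun k _ => ?_
  rw [mul_ite, mul_zero]

lemma den_eq (θ : ℝ) (n : ℕ) :
    (∑ x ∈ univ.filter
        (fun x : Fin n → Bool =>
          (3 / 4 : ℝ) * n ≤ ((univ.filter (fun i => x i = true)).card : ℝ)),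
      ∏ i, (if x i then θ else 1 - θ))
    = ∑ k ∈ Icc ⌈(3 / 4 : ℝ) * n⌉₊ n, bq θ n k := by
  have e1 : (∑ x ∈ univ.filter
        (fun x : Fin n → Bool =>
          (3 / 4 : ℝ) * n ≤ ((univ.filter (fun i => x i = true)).card : ℝ)),
      ∏ i, (if x i then θ else 1 - θ))
      = ∑ s ∈ univ.filter (fun s : Finset (Fin n) => (3 / 4 : ℝ) * n ≤ (s.card : ℝ)),
          θ ^ s.card * (1 - θ) ^ (n - s.card) := by
    rw [← sum_boolfun n (fun s => (3 / 4 : ℝ) * n ≤ (s.card : ℝ))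
      (fun s => θ ^ s.card * (1 - θ) ^ (n - s.card))]
    exact Finset.sum_congr rfl fun x _ => prod_ite_eq_pow n θ x
  rw [e1, filter_card_sum n (fun k => θ ^ k * (1 - θ) ^ (n - k))]
  refine Finset.sum_congr rfl fun k _ => ?_
  rw [bq, mul_assoc]

lemma num_eq (θ : ℝ) (n : ℕ) (hn : 0 < n) :
    (n : ℝ) * (∑ x ∈ univ.filter
        (fun x : Fin n → Bool =>
          (∀ h : 0 < n, x ⟨0, h⟩ = true) ∧
            (3 / 4 : ℝ) * n ≤ ((univ.filter (fun i => x i = true)).card : ℝ)),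
      ∏ i, (if x i then θ else 1 - θ))
    = ∑ k ∈ Icc ⌈(3 / 4 : ℝ) * n⌉₊ n, (k : ℝ) * bq θ n k := by
  have e1 : (∑ x ∈ univ.filter
        (fun x : Fin n → Bool =>
          (∀ h : 0 < n, x ⟨0, h⟩ = true) ∧
            (3 / 4 : ℝ) * n ≤ ((univ.filter (fun i => x i = true)).card : ℝ)),
      ∏ i, (if x i then θ else 1 - θ))
      = ∑ s ∈ univ.filter (fun s : Finset (Fin n) =>
            (⟨0, hn⟩ : Fin n) ∈ s ∧ (3 / 4 : ℝ) * n ≤ (s.card : ℝ)),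
          θ ^ s.card * (1 - θ) ^ (n - s.card) := by
    rw [← sum_boolfun n
      (fun s => (⟨0, hn⟩ : Fin n) ∈ s ∧ (3 / 4 : ℝ) * n ≤ (s.card : ℝ))
      (fun s => θ ^ s.card * (1 - θ) ^ (n - s.card))]
    refine Finset.sum_congr ?_ fun x _ => prod_ite_eq_pow n θ x
    refine Finset.filter_congr fun x _ => ?_
    simp only [Finset.mem_filter, Finset.mem_univ, true_and]
    constructor
    · rintro ⟨hall, hcard⟩; exact ⟨hall hn, hcard⟩
    · rintro ⟨h1, hcard⟩; exact ⟨fun _ => h1, hcard⟩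
  rw [e1]
  have e2 : (∑ s ∈ univ.filter (fun s : Finset (Fin n) =>
            (⟨0, hn⟩ : Fin n) ∈ s ∧ (3 / 4 : ℝ) * n ≤ (s.card : ℝ)),
          θ ^ s.card * (1 - θ) ^ (n - s.card))
      = ∑ s ∈ univ.filter (fun s : Finset (Fin n) => (3 / 4 : ℝ) * n ≤ (s.card : ℝ)),
          (if (⟨0, hn⟩ : Fin n) ∈ s then θ ^ s.card * (1 - θ) ^ (n - s.card) else 0) := by
    rw [Finset.sum_filter, Finset.sum_filter]
    refine Finset.sum_congr rfl fun s _ => ?_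
    by_cases h1 : (⟨0, hn⟩ : Fin n) ∈ s <;>
      by_cases h2 : (3 / 4 : ℝ) * n ≤ (s.card : ℝ) <;> simp [h1, h2]
  rw [e2, ← card_mul_sum n (fun k => θ ^ k * (1 - θ) ^ (n - k))
    (fun k => (3 / 4 : ℝ) * n ≤ (k : ℝ)) hn]
  rw [filter_card_sum n (fun k => (k : ℝ) * (θ ^ k * (1 - θ) ^ (n - k)))]
  refine Finset.sum_congr rfl fun k _ => ?_
  rw [bq]; ring

lemma main_bounds (θ : ℝ) (h0 : 0 < θ) (h34 : θ < 3 / 4) (n : ℕ) (hn : 0 < n) :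
    3 / 4 ≤
      (∑ x ∈ univ.filter
          (fun x : Fin n → Bool =>
            (∀ h : 0 < n, x ⟨0, h⟩ = true) ∧
              (3 / 4 : ℝ) * n ≤ ((univ.filter (fun i => x i = true)).card : ℝ)),
        ∏ i, (if x i then θ else 1 - θ))
      / (∑ x ∈ univ.filter
          (fun x : Fin n → Bool =>
            (3 / 4 : ℝ) * n ≤ ((univ.filter (fun i => x i = true)).card : ℝ)),
        ∏ i, (if x i then θ else 1 - θ))
    ∧ (∑ x ∈ univ.filter
          (fun x : Fin n → Bool =>
            (∀ h : 0 < n, x ⟨0, h⟩ = true) ∧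
              (3 / 4 : ℝ) * n ≤ ((univ.filter (fun i => x i = true)).card : ℝ)),
        ∏ i, (if x i then θ else 1 - θ))
      / (∑ x ∈ univ.filter
          (fun x : Fin n → Bool =>
            (3 / 4 : ℝ) * n ≤ ((univ.filter (fun i => x i = true)).card : ℝ)),
        ∏ i, (if x i then θ else 1 - θ))
      ≤ 3 / 4 + (1 + (θ / (3 * (1 - θ))) / (1 - θ / (3 * (1 - θ))) ^ 2) / n := by
  have h1 : (0:ℝ) < 1 - θ := by linarith
  have hθ1 : θ < 1 := by linarith
  set r : ℝ := θ / (3 * (1 - θ)) with hrdef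
  set c : ℝ := r / (1 - r) ^ 2 with hcdef
  have hr0 : (0:ℝ) ≤ r := by positivity
  have hc0 : (0:ℝ) ≤ c := div_nonneg hr0 (sq_nonneg _)
  set m := ⌈(3 / 4 : ℝ) * n⌉₊ with hmdef
  have hnR : (0:ℝ) < n := by exact_mod_cast hn
  have hmn : m ≤ n := Nat.ceil_le.mpr (by linarith)
  have hmge : (3 / 4 : ℝ) * n ≤ m := Nat.le_ceil _
  have hmlt : (m : ℝ) < 3 / 4 * n + 1 := Nat.ceil_lt_add_one (by positivity)
  have hD := den_eq θ n
  have hN := num_eq θ n hn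
  set D := ∑ k ∈ Icc m n, bq θ n k with hDdef
  set S := ∑ k ∈ Icc m n, (k:ℝ) * bq θ n k with hSdef
  have hqm : 0 < bq θ n m := bq_pos h0 hθ1 hmn
  have hqmD : bq θ n m ≤ D :=
    Finset.single_le_sum (fun k _ => bq_nonneg h0 hθ1 n k) (mem_Icc.mpr ⟨le_refl m, hmn⟩)
  have hDpos : 0 < D := lt_of_lt_of_le hqm hqmD
  have hSlow : (m:ℝ) * D ≤ S := by
    rw [hDdef, Finset.mul_sum]
    refine Finset.sum_le_sum fun k hk => ?_
    have hmk : (m:ℝ) ≤ k := by exact_mod_cast (mem_Icc.mp hk).1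
    exact mul_le_mul_of_nonneg_right hmk (bq_nonneg h0 hθ1 n k)
  have htail : ∑ k ∈ Icc m n, ((k:ℝ) - m) * bq θ n k ≤ c * bq θ n m :=
    tail_sum_le h0 h34 hmge
  have hSup : S ≤ ((m:ℝ) + c) * D := by
    have hsplit : S = (m:ℝ) * D + ∑ k ∈ Icc m n, ((k:ℝ) - m) * bq θ n k := by
      rw [hSdef, hDdef, Finset.mul_sum, ← Finset.sum_add_distrib]
      exact Finset.sum_congr rfl fun k _ => by ring
    have h2 : c * bq θ n m ≤ c * D := mul_le_mul_of_nonneg_left hqmD hc0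
    nlinarith [htail]
  set NUM := (∑ x ∈ univ.filter
          (fun x : Fin n → Bool =>
            (∀ h : 0 < n, x ⟨0, h⟩ = true) ∧
              (3 / 4 : ℝ) * n ≤ ((univ.filter (fun i => x i = true)).card : ℝ)),
        ∏ i, (if x i then θ else 1 - θ)) with hNUMdef
  have hNUM : NUM = S / n := by
    rw [eq_div_iff (ne_of_gt hnR), mul_comm]
    exact hN
  constructor
  · rw [hNUM, hD, div_div, le_div_iff₀ (by positivity)]
    nlinarith [hSlow, mul_le_mul_of_nonneg_right hmge hDpos.le]
  · rw [hNUM, hD, div_div, div_le_iff₀ (by positivity)]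
    have hexp : (3 / 4 + (1 + c) / (n:ℝ)) * ((n:ℝ) * D) = (3 / 4 * n + 1 + c) * D := by
      field_simp; ring
    rw [hexp]
    nlinarith [hSup, mul_le_mul_of_nonneg_right
      (by linarith : (m:ℝ) + c ≤ 3 / 4 * n + 1 + c) hDpos.le]

/-- for i.i.d. Bernoulli(θ) with `0 < θ < 3/4`, conditioning on the event
`{ (1/n) ∑_{i≤n} X_i ≥ 3/4 }` makes `Pr(X_1 = 1 | E_n)` converge to `3/4`; that is, the
conditional law of `X_1` converges to Bernoulli(3/4), the I-projection of Bernoulli(θ)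
onto `{Q : E_Q[X] ≥ 3/4}`. -/
theorem bernoulli_conditional_tilt_limit
    (θ : ℝ) (h0 : 0 < θ) (h34 : θ < 3 / 4) :
    Tendsto
      (fun n : ℕ =>
        (∑ x ∈ univ.filter
            (fun x : Fin n → Bool =>
              (∀ h : 0 < n, x ⟨0, h⟩ = true) ∧
                (3 / 4 : ℝ) * n ≤ ((univ.filter (fun i => x i = true)).card : ℝ)),
          ∏ i, (if x i then θ else 1 - θ))
        / (∑ x ∈ univ.filter
            (fun x : Fin n → Bool =>
              (3 / 4 : ℝ) * n ≤ ((univ.filter (fun i => x i = true)).card : ℝ)),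
          ∏ i, (if x i then θ else 1 - θ)))
      atTop (𝓝 (3 / 4)) := by
  apply tendsto_of_tendsto_of_tendsto_of_le_of_le' (g := fun _ : ℕ => (3/4 : ℝ))
    (h := fun n : ℕ => 3 / 4 + (1 + (θ / (3 * (1 - θ))) / (1 - θ / (3 * (1 - θ))) ^ 2) / n)
    tendsto_const_nhds
  · have := tendsto_const_div_atTop_nhds_zero_nat
      (1 + (θ / (3 * (1 - θ))) / (1 - θ / (3 * (1 - θ))) ^ 2)
    simpa using tendsto_const_nhds.add this
  · filter_upwards [eventually_gt_atTop 0] with n hn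
    exact (main_bounds θ h0 h34 n hn).1
  · filter_upwards [eventually_gt_atTop 0] with n hn
    exact (main_bounds θ h0 h34 n hn).2
end

section
/- Among all probability densities on ℝ with mean m and variance v > 0 (second moment constraints), the differential entropy −∫ f log f is uniquely maximized by the Gaussian density N(m, v), with maximal entropy (1/2) log(2πev). -/
open MeasureTheory Real

/-- The Gaussian density with mean `m` and variance `v`. -/
noncomputable def gaussDensity (m v : ℝ) : ℝ → ℝ :=
  fun x => (Real.sqrt (2 * π * v))⁻¹ * Real.exp (-(x - m) ^ 2 / (2 * v))

open Filter Asymptotics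

lemma integrable_sq_mul_exp {b : ℝ} (hb : 0 < b) :
    Integrable (fun x : ℝ => x ^ 2 * Real.exp (-b * x ^ 2)) := by
  have h := integrable_rpow_mul_exp_neg_mul_sq hb (s := 2) (by norm_num)
  refine h.congr ?_
  refine Filter.Eventually.of_forall fun x => ?_
  show x ^ ((2:ℕ):ℝ) * Real.exp (-b * x ^ 2) = x ^ 2 * Real.exp (-b * x ^ 2)
  rw [Real.rpow_natCast]

lemma tendsto_mul_exp_neg_mul_sq_atTop {b : ℝ} (hb : 0 < b) :
    Tendsto (fun x : ℝ => x * Real.exp (-b * x ^ 2)) atTop (nhds 0) := by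
  have h := rpow_mul_exp_neg_mul_sq_isLittleO_exp_neg hb 1
  have h2 : Tendsto (fun x : ℝ => Real.exp (-(1/2) * x)) atTop (nhds 0) := by
    have := Real.tendsto_exp_atBot
    refine this.comp ?_
    exact (tendsto_const_mul_atBot_of_neg (by norm_num)).mpr tendsto_id
  have := h.trans_tendsto h2
  refine this.congr' ?_
  filter_upwards with x
  rw [Real.rpow_one]

lemma tendsto_mul_exp_neg_mul_sq_atBot {b : ℝ} (hb : 0 < b) :
    Tendsto (fun x : ℝ => x * Real.exp (-b * x ^ 2)) atBot (nhds 0) := by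
  have h := (tendsto_mul_exp_neg_mul_sq_atTop hb).neg
  rw [neg_zero] at h
  have := h.comp tendsto_neg_atBot_atTop
  refine this.congr fun x => ?_
  simp [Function.comp]

lemma integral_sq_mul_exp {b : ℝ} (hb : 0 < b) :
    ∫ x : ℝ, x ^ 2 * Real.exp (-b * x ^ 2) = Real.sqrt (π / b) / (2 * b) := by
  set F : ℝ → ℝ := fun x => -(x / (2 * b)) * Real.exp (-b * x ^ 2) with hF
  have hderiv : ∀ x : ℝ, HasDerivAt F
      (x ^ 2 * Real.exp (-b * x ^ 2) - (1 / (2 * b)) * Real.exp (-b * x ^ 2)) x := by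
    intro x
    have h1 : HasDerivAt (fun x : ℝ => -(x / (2 * b))) (-(1 / (2 * b))) x := by
      simpa using ((hasDerivAt_id x).div_const (2 * b)).fun_neg
    have h2 : HasDerivAt (fun x : ℝ => Real.exp (-b * x ^ 2)) (-b * (2 * x) * Real.exp (-b * x ^ 2)) x := by
      have h3 : HasDerivAt (fun x : ℝ => -b * x ^ 2) (-b * (2 * x)) x := by
        simpa using ((hasDerivAt_pow 2 x).const_mul (-b))
      simpa [mul_comm] using h3.exp
    have := h1.fun_mul h2
    refine this.congr_deriv ?_
    field_simp
    ring
  have hint : Integrable (fun x : ℝ => x ^ 2 * Real.exp (-b * x ^ 2) - (1 / (2 * b)) * Real.exp (-b * x ^ 2)) :=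
    (integrable_sq_mul_exp hb).sub ((integrable_exp_neg_mul_sq hb).const_mul _)
  have hbot : Tendsto F atBot (nhds 0) := by
    have := ((tendsto_mul_exp_neg_mul_sq_atBot hb).div_const (2 * b)).neg
    norm_num at this
    refine this.congr fun x => ?_
    rw [hF]; ring_nf
  have htop : Tendsto F atTop (nhds 0) := by
    have := ((tendsto_mul_exp_neg_mul_sq_atTop hb).div_const (2 * b)).neg
    norm_num at this
    refine this.congr fun x => ?_
    rw [hF]; ring_nf
  have key := integral_of_hasDerivAt_of_tendsto hderiv hint hbot htop
  rw [sub_zero] at key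
  have hsplit : ∫ x : ℝ, (x ^ 2 * Real.exp (-b * x ^ 2) - (1 / (2 * b)) * Real.exp (-b * x ^ 2))
      = (∫ x : ℝ, x ^ 2 * Real.exp (-b * x ^ 2)) - (1 / (2 * b)) * ∫ x : ℝ, Real.exp (-b * x ^ 2) := by
    rw [integral_sub (integrable_sq_mul_exp hb) ((integrable_exp_neg_mul_sq hb).const_mul _),
      integral_const_mul]
  rw [hsplit, integral_gaussian] at key
  have : (∫ x : ℝ, x ^ 2 * Real.exp (-b * x ^ 2)) = (1 / (2 * b)) * Real.sqrt (π / b) := by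
    linarith
  rw [this]; ring

lemma gaussDensity_eq_pdf (m : ℝ) {v : ℝ} (hv : 0 < v) :
    gaussDensity m v = ProbabilityTheory.gaussianPDFReal m ⟨v, hv.le⟩ := rfl

lemma gaussDensity_pos (m : ℝ) {v : ℝ} (hv : 0 < v) (x : ℝ) : 0 < gaussDensity m v x := by
  unfold gaussDensity
  positivity

lemma integrable_gaussDensity (m : ℝ) {v : ℝ} (hv : 0 < v) :
    Integrable (gaussDensity m v) := by
  rw [gaussDensity_eq_pdf m hv]
  exact ProbabilityTheory.integrable_gaussianPDFReal m _

lemma integral_gaussDensity (m : ℝ) {v : ℝ} (hv : 0 < v) :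
    ∫ x, gaussDensity m v x = 1 := by
  rw [gaussDensity_eq_pdf m hv]
  refine ProbabilityTheory.integral_gaussianPDFReal_eq_one m ?_
  intro h
  exact hv.ne' (congrArg NNReal.toReal h)

lemma variance_gaussDensity (m : ℝ) {v : ℝ} (hv : 0 < v) :
    ∫ x, (x - m) ^ 2 * gaussDensity m v x = v := by
  have hb : (0:ℝ) < 1 / (2 * v) := by positivity
  have hshift : ∫ x, (x - m) ^ 2 * gaussDensity m v x
      = ∫ y, y ^ 2 * ((Real.sqrt (2 * π * v))⁻¹ * Real.exp (-(1 / (2 * v)) * y ^ 2)) := by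
    rw [← integral_add_right_eq_self
      (fun y : ℝ => y ^ 2 * ((Real.sqrt (2 * π * v))⁻¹ * Real.exp (-(1 / (2 * v)) * y ^ 2))) (-m)]
    refine integral_congr_ae (Filter.Eventually.of_forall fun x => ?_)
    show (x - m) ^ 2 * gaussDensity m v x
      = (x + -m) ^ 2 * ((Real.sqrt (2 * π * v))⁻¹ * Real.exp (-(1 / (2 * v)) * (x + -m) ^ 2))
    unfold gaussDensity
    rw [show -(1 / (2 * v)) * (x + -m) ^ 2 = -(x - m) ^ 2 / (2 * v) from by ring]
    ring
  rw [hshift]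
  have : ∫ y : ℝ, y ^ 2 * ((Real.sqrt (2 * π * v))⁻¹ * Real.exp (-(1 / (2 * v)) * y ^ 2))
      = (Real.sqrt (2 * π * v))⁻¹ * ∫ y : ℝ, y ^ 2 * Real.exp (-(1 / (2 * v)) * y ^ 2) := by
    rw [← integral_const_mul]
    congr 1; funext y; ring
  rw [this, integral_sq_mul_exp hb]
  have h1 : π / (1 / (2 * v)) = 2 * π * v := by field_simp
  rw [h1]
  have h2 : (0:ℝ) < Real.sqrt (2 * π * v) := Real.sqrt_pos.mpr (by positivity)
  field_simp

lemma log_gaussDensity (m : ℝ) {v : ℝ} (hv : 0 < v) (x : ℝ) :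
    Real.log (gaussDensity m v x)
      = -(Real.log (Real.sqrt (2 * π * v)) + (x - m) ^ 2 / (2 * v)) := by
  unfold gaussDensity
  have h2 : (0:ℝ) < Real.sqrt (2 * π * v) := Real.sqrt_pos.mpr (by positivity)
  rw [Real.log_mul (by positivity) (Real.exp_ne_zero _), Real.log_inv, Real.log_exp]
  ring

lemma log_sqrt_two_pi_v {v : ℝ} (hv : 0 < v) :
    Real.log (Real.sqrt (2 * π * v)) = (1/2) * Real.log (2 * π * v) := by
  rw [Real.log_sqrt (by positivity)]; ring

/-- half-log identity -/
lemma half_log_identity {v : ℝ} (hv : 0 < v) :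
    (1 / 2) * Real.log (2 * π * Real.exp 1 * v)
      = Real.log (Real.sqrt (2 * π * v)) + 1 / 2 := by
  rw [log_sqrt_two_pi_v hv]
  have : 2 * π * Real.exp 1 * v = (2 * π * v) * Real.exp 1 := by ring
  rw [this, Real.log_mul (by positivity) (Real.exp_ne_zero _), Real.log_exp]
  ring

lemma gibbs_pointwise {a b : ℝ} (ha : 0 ≤ a) (hb : 0 < b) :
    0 ≤ a * Real.log a - a * Real.log b - a + b
      ∧ (a * Real.log a - a * Real.log b - a + b = 0 → a = b) := by
  rcases ha.eq_or_lt with h | h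
  · subst h
    simp
    constructor
    · exact hb.le
    · intro h; exact absurd h hb.ne'
  · have hlog : Real.log (b / a) ≤ b / a - 1 := Real.log_le_sub_one_of_pos (by positivity)
    have hsplit : Real.log (b / a) = Real.log b - Real.log a := Real.log_div hb.ne' h.ne'
    have key : a * Real.log a - a * Real.log b - a + b
        = a * ((b / a - 1) - Real.log (b / a)) := by
      rw [hsplit]; field_simp; ring
    constructor
    · rw [key]
      exact mul_nonneg h.le (by linarith)
    · intro h0
      rw [key] at h0
      have h1 : (b / a - 1) - Real.log (b / a) = 0 := by
        rcases mul_eq_zero.mp h0 with h' | h'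
        · exact absurd h' h.ne'
        · exact h'
      by_contra hab
      have hne : b / a ≠ 1 := by
        intro h2
        exact hab ((div_eq_one_iff_eq h.ne').mp h2).symm
      have := Real.log_lt_sub_one_of_pos (by positivity : 0 < b / a) hne
      linarith

/-- cross-entropy integral: for a density `f` with given second-moment structure,
`∫ f log g = -(log √(2πv) + 1/2)`. -/
lemma integral_mul_log_gaussDensity (m : ℝ) {v : ℝ} (hv : 0 < v) (f : ℝ → ℝ)
    (hf : Integrable f) (h1 : ∫ x, f x = 1)
    (h2i : Integrable (fun x => (x - m) ^ 2 * f x)) (h2 : ∫ x, (x - m) ^ 2 * f x = v) :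
    Integrable (fun x => f x * Real.log (gaussDensity m v x))
      ∧ ∫ x, f x * Real.log (gaussDensity m v x)
          = -(Real.log (Real.sqrt (2 * π * v)) + 1 / 2) := by
  set C := Real.log (Real.sqrt (2 * π * v)) with hC
  have heq : (fun x => f x * Real.log (gaussDensity m v x))
      = fun x => (-C) * f x + (-(1 / (2 * v))) * ((x - m) ^ 2 * f x) := by
    funext x
    rw [log_gaussDensity m hv x]
    ring
  have hint : Integrable (fun x => (-C) * f x + (-(1 / (2 * v))) * ((x - m) ^ 2 * f x)) :=
    (hf.const_mul _).add (h2i.const_mul _)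
  refine ⟨heq ▸ hint, ?_⟩
  rw [heq, integral_add (hf.const_mul _) (h2i.const_mul _), integral_const_mul,
    integral_const_mul, h1, h2]
  field_simp
  ring

lemma integrable_sq_mul_gaussDensity (m : ℝ) {v : ℝ} (hv : 0 < v) :
    Integrable (fun x => (x - m) ^ 2 * gaussDensity m v x) := by
  have hb : (0:ℝ) < 1 / (2 * v) := by positivity
  have h : Integrable (fun y : ℝ =>
      y ^ 2 * ((Real.sqrt (2 * π * v))⁻¹ * Real.exp (-(1 / (2 * v)) * y ^ 2))) := by
    have := ((integrable_sq_mul_exp hb).const_mul (Real.sqrt (2 * π * v))⁻¹)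
    refine this.congr (Filter.Eventually.of_forall fun y => ?_)
    ring
  have := Integrable.comp_sub_right h m
  refine this.congr (Filter.Eventually.of_forall fun x => ?_)
  show (x - m) ^ 2 * ((Real.sqrt (2 * π * v))⁻¹ * Real.exp (-(1 / (2 * v)) * (x - m) ^ 2))
    = (x - m) ^ 2 * gaussDensity m v x
  unfold gaussDensity
  rw [show -(1 / (2 * v)) * (x - m) ^ 2 = -(x - m) ^ 2 / (2 * v) from by ring]

/-- among all probability densities on ℝ with mean `m` and variance
`v > 0`, differential entropy `-∫ f log f` is uniquely (up to a.e. equality) maximized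
by the Gaussian density `N(m, v)`, with maximal entropy `(1/2) log(2πev)`. -/
theorem gaussian_maximizes_differential_entropy
    (m v : ℝ) (hv : 0 < v) :
    (∀ f : ℝ → ℝ, (∀ x, 0 ≤ f x) → Integrable f →
        (∫ x, f x = 1) →
        Integrable (fun x => x * f x) → (∫ x, x * f x = m) →
        Integrable (fun x => (x - m) ^ 2 * f x) → (∫ x, (x - m) ^ 2 * f x = v) →
        Integrable (fun x => f x * Real.log (f x)) →
        (-∫ x, f x * Real.log (f x)) ≤ (1 / 2) * Real.log (2 * π * Real.exp 1 * v)
        ∧ ((-∫ x, f x * Real.log (f x)) = (1 / 2) * Real.log (2 * π * Real.exp 1 * v) →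
            f =ᵐ[volume] gaussDensity m v))
    ∧ (-∫ x, gaussDensity m v x * Real.log (gaussDensity m v x))
        = (1 / 2) * Real.log (2 * π * Real.exp 1 * v) := by
  have hgi := integrable_gaussDensity m hv
  have hg1 := integral_gaussDensity m hv
  have hgvi := integrable_sq_mul_gaussDensity m hv
  have hgv := variance_gaussDensity m hv
  obtain ⟨hgl_int, hgl⟩ := integral_mul_log_gaussDensity m hv (gaussDensity m v) hgi hg1 hgvi hgv
  have hpart2 : (-∫ x, gaussDensity m v x * Real.log (gaussDensity m v x))
      = (1 / 2) * Real.log (2 * π * Real.exp 1 * v) := by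
    rw [hgl, half_log_identity hv]
    ring
  refine ⟨?_, hpart2⟩
  intro f hf0 hfi hf1 _ _ hf2i hf2 hfli
  obtain ⟨hfl_int, hfl⟩ := integral_mul_log_gaussDensity m hv f hfi hf1 hf2i hf2
  set ψ : ℝ → ℝ := fun x => f x * Real.log (f x) - f x * Real.log (gaussDensity m v x)
      - f x + gaussDensity m v x with hψ
  have hψ0 : ∀ x, 0 ≤ ψ x := fun x =>
    (gibbs_pointwise (hf0 x) (gaussDensity_pos m hv x)).1
  have hψint : Integrable ψ := (((hfli.sub hfl_int).sub hfi).add hgi)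
  have hψeq : ∫ x, ψ x = (∫ x, f x * Real.log (f x))
      + (Real.log (Real.sqrt (2 * π * v)) + 1 / 2) := by
    have hI2 : Integrable (fun x => f x * Real.log (f x)
        - f x * Real.log (gaussDensity m v x)) := hfli.sub hfl_int
    have hI1 : Integrable (fun x => f x * Real.log (f x)
        - f x * Real.log (gaussDensity m v x) - f x) := hI2.sub hfi
    have : ∫ x, ψ x = ((∫ x, f x * Real.log (f x))
        - (∫ x, f x * Real.log (gaussDensity m v x)) - ∫ x, f x) + ∫ x, gaussDensity m v x := by
      rw [show (∫ x, ψ x) = ∫ x, ((f x * Real.log (f x)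
          - f x * Real.log (gaussDensity m v x) - f x) + gaussDensity m v x) from rfl,
        integral_add hI1 hgi, integral_sub hI2 hfi, integral_sub hfli hfl_int]
    rw [this, hfl, hf1, hg1]
    ring
  have hineq : 0 ≤ ∫ x, ψ x := integral_nonneg hψ0
  have hhalf := half_log_identity hv
  constructor
  · rw [hhalf]
    linarith [hψeq ▸ hineq]
  · intro heq
    rw [hhalf] at heq
    have hzero : ∫ x, ψ x = 0 := by linarith [hψeq]
    have hae : ψ =ᵐ[volume] 0 :=
      (integral_eq_zero_iff_of_nonneg hψ0 hψint).mp hzero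
    filter_upwards [hae] with x hx
    exact (gibbs_pointwise (hf0 x) (gaussDensity_pos m hv x)).2 hx
end
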